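/- Let d ≥ 2 be a natural number and let 2 ≤ R₁ < R₂ be real numbers. Among all nonnegative continuous functions g on [R₁, R₂] with ∫_{R₁}^{R₂} g(t) dt > 0, the quantity (∫_{R₁}^{R₂} g(t)^d (t log t)^{d-1} dt) / (∫_{R₁}^{R₂} g(t) dt)^d is minimized by g(t) = 1/(t log t), and its minimal value is (log(log R₂ / log R₁))^{1-d}. -/

import Mathlib

open MeasureTheory

open Real in
theorem stmt1 (d : ℕ) (hd : 2 ≤ d) (R₁ R₂ : ℝ) (h1 : 2 ≤ R₁) (h2 : R₁ < R₂) :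
    (∀ g : ℝ → ℝ, ContinuousOn g (Set.Icc R₁ R₂) →
      (∀ t ∈ Set.Icc R₁ R₂, 0 ≤ g t) →
      0 < (∫ t in R₁..R₂, g t) →
      (Real.log (Real.log R₂ / Real.log R₁)) ^ (1 - (d : ℤ)) ≤
        (∫ t in R₁..R₂, g t ^ d * (t * Real.log t) ^ (d - 1)) /
          (∫ t in R₁..R₂, g t) ^ d) ∧
    (∫ t in R₁..R₂, (1 / (t * Real.log t)) ^ d * (t * Real.log t) ^ (d - 1)) /
        (∫ t in R₁..R₂, 1 / (t * Real.log t)) ^ d =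
      (Real.log (Real.log R₂ / Real.log R₁)) ^ (1 - (d : ℤ)) := by
  have hR1 : (0:ℝ) < R₁ := by linarith
  have hlogR1 : 0 < Real.log R₁ := Real.log_pos (by linarith)
  have hlogR12 : Real.log R₁ < Real.log R₂ := Real.log_lt_log hR1 h2
  set L := Real.log (Real.log R₂ / Real.log R₁) with hLdef
  have hL : 0 < L := Real.log_pos ((one_lt_div hlogR1).2 hlogR12)
  have hu : ∀ t ∈ Set.Icc R₁ R₂, 0 < t * Real.log t := by
    intro t ht
    have h0t : 0 < t := lt_of_lt_of_le hR1 ht.1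
    have : 0 < Real.log t := lt_of_lt_of_le hlogR1 (Real.log_le_log hR1 ht.1)
    positivity
  have huIcc : Set.uIcc R₁ R₂ = Set.Icc R₁ R₂ := Set.uIcc_of_le h2.le
  have hucont : ContinuousOn (fun t : ℝ => t * Real.log t) (Set.Icc R₁ R₂) := by
    apply continuousOn_id.mul
    apply Real.continuousOn_log.mono
    intro t ht
    exact (lt_of_lt_of_le hR1 ht.1).ne'
  have hcont1u : ContinuousOn (fun t => 1 / (t * Real.log t)) (Set.Icc R₁ R₂) :=
    ContinuousOn.div continuousOn_const hucont (fun t ht => (hu t ht).ne')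
  -- the basic integral
  have hInt1u : (∫ t in R₁..R₂, 1 / (t * Real.log t)) = L := by
    have hderiv : ∀ x ∈ Set.uIcc R₁ R₂,
        HasDerivAt (fun x => Real.log (Real.log x)) (1 / (x * Real.log x)) x := by
      intro x hx
      rw [huIcc] at hx
      have h0x : 0 < x := lt_of_lt_of_le hR1 hx.1
      have hlx : 0 < Real.log x := lt_of_lt_of_le hlogR1 (Real.log_le_log hR1 hx.1)
      have := (Real.hasDerivAt_log hlx.ne').comp x (Real.hasDerivAt_log h0x.ne')
      exact this.congr_deriv (by ring)
    rw [intervalIntegral.integral_eq_sub_of_hasDerivAt hderiv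
      ((hcont1u.mono (le_of_eq huIcc)).intervalIntegrable)]
    rw [hLdef, Real.log_div (hlogR1.trans hlogR12).ne' hlogR1.ne']
  constructor
  · -- the Hölder lower bound
    intro g hgc hg0 hgpos
    set μ : Measure ℝ := volume.restrict (Set.Ioc R₁ R₂) with hμdef
    haveI : IsFiniteMeasure μ := by
      constructor
      rw [hμdef, Measure.restrict_apply_univ, Real.volume_Ioc]
      exact ENNReal.ofReal_lt_top
    have memLp : ∀ (F : ℝ → ℝ) (p : ENNReal), ContinuousOn F (Set.Icc R₁ R₂) → MemLp F p μ := by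
      intro F p hF
      obtain ⟨C, hC⟩ := isCompact_Icc.exists_bound_of_continuousOn hF
      exact MemLp.of_bound
        ((hF.mono Set.Ioc_subset_Icc_self).aestronglyMeasurable measurableSet_Ioc) C
        ((ae_restrict_mem measurableSet_Ioc).mono fun x hx => hC x (Set.Ioc_subset_Icc_self hx))
    have hd1 : (1:ℝ) < d := by exact_mod_cast hd.trans_lt' one_lt_two
    have hd0 : (d:ℝ) ≠ 0 := by positivity
    have hdm1 : (0:ℝ) < (d:ℝ) - 1 := by linarith
    set p : ℝ := (d:ℝ) with hpdef
    set q : ℝ := (d:ℝ) / ((d:ℝ) - 1) with hqdef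
    have hpq : p.HolderConjugate q := Real.HolderConjugate.conjExponent hd1
    set a : ℝ := ((d:ℝ) - 1) / d with hadef
    set f : ℝ → ℝ := fun t => g t * (t * Real.log t) ^ a with hfdef
    set h : ℝ → ℝ := fun t => (t * Real.log t) ^ (-a) with hhdef
    have hfc : ContinuousOn f (Set.Icc R₁ R₂) :=
      hgc.mul (hucont.rpow_const (fun t ht => Or.inl (hu t ht).ne'))
    have hhc : ContinuousOn h (Set.Icc R₁ R₂) :=
      hucont.rpow_const (fun t ht => Or.inl (hu t ht).ne')
    have hf0 : 0 ≤ᵐ[μ] f := by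
      filter_upwards [ae_restrict_mem measurableSet_Ioc] with t ht
      have ht' := Set.Ioc_subset_Icc_self ht
      exact mul_nonneg (hg0 t ht') (Real.rpow_nonneg (hu t ht').le _)
    have hh0 : 0 ≤ᵐ[μ] h := by
      filter_upwards [ae_restrict_mem measurableSet_Ioc] with t ht
      exact Real.rpow_nonneg (hu t (Set.Ioc_subset_Icc_self ht)).le _
    have holder := MeasureTheory.integral_mul_le_Lp_mul_Lq_of_nonneg (μ := μ) hpq hf0 hh0
      (memLp f _ hfc) (memLp h _ hhc)
    -- identify the three integrals
    have e1 : (∫ t, f t * h t ∂μ) = ∫ t in R₁..R₂, g t := by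
      rw [intervalIntegral.integral_of_le h2.le, hμdef]
      apply setIntegral_congr_fun measurableSet_Ioc
      intro t ht
      have htu := hu t (Set.Ioc_subset_Icc_self ht)
      simp only [hfdef, hhdef]
      rw [mul_assoc, ← Real.rpow_add htu]
      simp
    have e2 : (∫ t, f t ^ p ∂μ) = ∫ t in R₁..R₂, g t ^ d * (t * Real.log t) ^ (d - 1) := by
      rw [intervalIntegral.integral_of_le h2.le, hμdef]
      apply setIntegral_congr_fun measurableSet_Ioc
      intro t ht
      have ht' := Set.Ioc_subset_Icc_self ht
      have htu := hu t ht'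
      simp only [hfdef, hpdef]
      rw [Real.mul_rpow (hg0 t ht') (Real.rpow_nonneg htu.le _),
        Real.rpow_natCast (g t) d, ← Real.rpow_mul htu.le]
      congr 1
      have : a * (d:ℝ) = ((d - 1 : ℕ) : ℝ) := by
        rw [hadef, Nat.cast_sub (by omega)]
        field_simp
        norm_num
      rw [this, Real.rpow_natCast]
    have e3 : (∫ t, h t ^ q ∂μ) = L := by
      rw [← hInt1u, intervalIntegral.integral_of_le h2.le, hμdef]
      apply setIntegral_congr_fun measurableSet_Ioc
      intro t ht
      have htu := hu t (Set.Ioc_subset_Icc_self ht)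
      simp only [hhdef]
      rw [← Real.rpow_mul htu.le]
      have hnaq : -a * q = -1 := by
        rw [hadef, hqdef]
        field_simp
        rw [div_self hdm1.ne']
      rw [hnaq, Real.rpow_neg_one, one_div]
    rw [e1, e2, e3] at holder
    set I := ∫ t in R₁..R₂, g t with hIdef
    set A := ∫ t in R₁..R₂, g t ^ d * (t * Real.log t) ^ (d - 1) with hAdef
    have hA0 : 0 ≤ A := intervalIntegral.integral_nonneg h2.le fun t ht =>
      mul_nonneg (pow_nonneg (hg0 t ht) d) (pow_nonneg (hu t ht).le _)
    have key : I ^ d ≤ A * L ^ (d - 1) :=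
      calc I ^ d = I ^ (d : ℝ) := (Real.rpow_natCast I d).symm
        _ ≤ (A ^ (1/p) * L ^ (1/q)) ^ (d : ℝ) :=
            Real.rpow_le_rpow hgpos.le holder (by positivity)
        _ = A * L ^ (d - 1) := by
            rw [Real.mul_rpow (Real.rpow_nonneg hA0 _) (Real.rpow_nonneg hL.le _),
              ← Real.rpow_mul hA0, ← Real.rpow_mul hL.le]
            have ep : (1/p) * (d:ℝ) = 1 := by rw [hpdef]; field_simp
            have eq' : (1/q) * (d:ℝ) = ((d - 1 : ℕ) : ℝ) := by
              rw [hqdef, Nat.cast_sub (by omega)]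
              field_simp
              norm_num
            rw [ep, eq', Real.rpow_one, Real.rpow_natCast]
    rw [le_div_iff₀ (pow_pos hgpos d)]
    calc L ^ (1 - (d:ℤ)) * I ^ d ≤ L ^ (1 - (d:ℤ)) * (A * L ^ (d - 1)) :=
          mul_le_mul_of_nonneg_left key (zpow_nonneg hL.le _)
      _ = A := by
          rw [← zpow_natCast L (d - 1), mul_comm A, ← mul_assoc, ← zpow_add₀ hL.ne']
          have hz : 1 - (d:ℤ) + ((d - 1 : ℕ) : ℤ) = 0 := by omega
          rw [hz, zpow_zero, one_mul]
  · -- the equality case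
    have hcong : Set.EqOn (fun t => (1 / (t * Real.log t)) ^ d * (t * Real.log t) ^ (d - 1))
        (fun t => 1 / (t * Real.log t)) (Set.uIcc R₁ R₂) := by
      intro t ht
      rw [huIcc] at ht
      have htu := (hu t ht).ne'
      have hpow : (t * Real.log t) ^ d = (t * Real.log t) ^ (d - 1) * (t * Real.log t) := by
        rw [← pow_succ]
        congr 1
        omega
      show (1 / (t * Real.log t)) ^ d * (t * Real.log t) ^ (d - 1) = 1 / (t * Real.log t)
      rw [div_pow, one_pow, hpow]
      field_simp
    rw [intervalIntegral.integral_congr hcong, hInt1u]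
    rw [zpow_sub₀ hL.ne', zpow_one, zpow_natCast]
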